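/- Chain-of-balls lemma: Let δ ∈ (0, 1/3) and let {B_i}_{i=1}^n be balls in a metric space such that consecutive balls intersect (B_k ∩ B_{k+1} ≠ ∅), every radius is a power δ^k (k an integer), and any two balls of equal radius d are at distance ≥ R·d for a sufficiently large constant R. Let B_{k₀} have the maximal radius. Then every point x in the union ∪B_i satisfies dist(x, center(B_{k₀})) ≤ radius(B_{k₀}) · Σ_{k≥0} 2^k δ^k = radius(B_{k₀})·(1 + 2δ + 4δ² + ...). -/

import Mathlib

open Metric

def ChainHyp (δ : ℝ) {M : Type} [MetricSpace M] (R : ℝ) (n : ℕ)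
    (c : Fin n → M) (ρ : Fin n → ℝ) : Prop :=
  (∀ i, ∃ k : ℤ, ρ i = δ ^ k) ∧
  (∀ (i : ℕ) (h : i + 1 < n),
    (closedBall (c ⟨i, Nat.lt_of_succ_lt h⟩) (ρ ⟨i, Nat.lt_of_succ_lt h⟩) ∩
      closedBall (c ⟨i + 1, h⟩) (ρ ⟨i + 1, h⟩)).Nonempty) ∧
  (∀ i j, i ≠ j → ρ i = ρ j →
    ∀ p ∈ closedBall (c i) (ρ i), ∀ q ∈ closedBall (c j) (ρ j),
      R * ρ i ≤ dist p q)

def Concl (δ : ℝ) (n : ℕ) : Prop :=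
  ∀ (M : Type) [MetricSpace M] (R : ℝ), 2 / (1 - 2 * δ) ≤ R →
    ∀ (c : Fin n → M) (ρ : Fin n → ℝ), ChainHyp δ R n c ρ →
      ∀ k₀ : Fin n, (∀ i, ρ i ≤ ρ k₀) →
        ∀ i, ∀ x ∈ closedBall (c i) (ρ i),
          dist x (c k₀) ≤ ρ k₀ * (1 / (1 - 2 * δ))

lemma chainHyp_sub {δ : ℝ} {M : Type} [MetricSpace M] {R : ℝ} {n : ℕ}
    {c : Fin n → M} {ρ : Fin n → ℝ} (hyp : ChainHyp δ R n c ρ)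
    (a m : ℕ) (ham : a + m ≤ n) :
    ChainHyp δ R m (fun j => c ⟨a + j.1, by omega⟩) (fun j => ρ ⟨a + j.1, by omega⟩) := by
  obtain ⟨h1, h2, h3⟩ := hyp
  refine ⟨fun i => h1 _, ?_, ?_⟩
  · intro i h
    exact h2 (a + i) (by omega)
  · intro i j hij heq p hp q hq
    refine h3 _ _ (fun hc => hij ?_) heq p hp q hq
    have : a + i.1 = a + j.1 := congrArg Fin.val hc
    exact Fin.ext (by omega)

lemma chainHyp_rev {δ : ℝ} {M : Type} [MetricSpace M] {R : ℝ} {n : ℕ}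
    {c : Fin n → M} {ρ : Fin n → ℝ} (hyp : ChainHyp δ R n c ρ) :
    ChainHyp δ R n (c ∘ Fin.rev) (ρ ∘ Fin.rev) := by
  obtain ⟨h1, h2, h3⟩ := hyp
  refine ⟨fun i => h1 _, ?_, ?_⟩
  · intro i h
    have h' : (n - 2 - i) + 1 < n := by omega
    obtain ⟨q, hq1, hq2⟩ := h2 (n - 2 - i) h'
    refine ⟨q, ?_, ?_⟩
    · have e : Fin.rev (⟨i, Nat.lt_of_succ_lt h⟩ : Fin n) = ⟨(n - 2 - i) + 1, h'⟩ := by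
        simp [Fin.rev]; omega
      simpa [Function.comp, e] using hq2
    · have e : Fin.rev (⟨i + 1, h⟩ : Fin n) = ⟨n - 2 - i, by omega⟩ := by
        simp [Fin.rev]; omega
      simpa [Function.comp, e] using hq1
  · intro i j hij heq p hp q hq
    exact h3 _ _ (fun hc => hij (Fin.rev_injective hc)) heq p hp q hq

/-- Two powers of `δ` with one strictly smaller differ by a factor `δ`. -/
lemma pow_step {δ : ℝ} (hδ0 : 0 < δ) (hδ1 : δ < 1) {x y : ℝ}
    (hx : ∃ k : ℤ, x = δ ^ k) (hy : ∃ k : ℤ, y = δ ^ k)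
    (hle : x ≤ y) (hne : x ≠ y) : x ≤ δ * y := by
  obtain ⟨a, rfl⟩ := hx
  obtain ⟨b, rfl⟩ := hy
  have hlt : (δ : ℝ) ^ a < δ ^ b := lt_of_le_of_ne hle hne
  have hba : b < a := (zpow_lt_zpow_iff_right_of_lt_one₀ hδ0 hδ1).mp hlt
  have : (δ : ℝ) ^ a ≤ δ ^ (b + 1) :=
    (zpow_le_zpow_iff_right_of_lt_one₀ hδ0 hδ1).mpr (by omega)
  calc (δ:ℝ) ^ a ≤ δ ^ (b+1) := this
    _ = δ * δ ^ b := by rw [zpow_add_one₀ (ne_of_gt hδ0)]; ring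

/-- No other ball on the right of `k₀` has the maximal radius. -/
lemma no_twin {δ : ℝ} (hδ0 : 0 < δ) (hδ : δ < 1/3) {n : ℕ}
    (IH : ∀ m < n, Concl δ m)
    {M : Type} [MetricSpace M] {R : ℝ} (hR : 2 / (1 - 2 * δ) ≤ R)
    {c : Fin n → M} {ρ : Fin n → ℝ} (hyp : ChainHyp δ R n c ρ)
    (k₀ : Fin n) (hmax : ∀ i, ρ i ≤ ρ k₀) :
    ∀ t : Fin n, k₀ < t → ρ t ≠ ρ k₀ := by
  have h12 : 0 < 1 - 2 * δ := by linarith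
  have hδ1 : δ < 1 := by linarith
  have hu : (0:ℝ) < 1 / (1 - 2 * δ) := by positivity
  have hR0 : 0 < R := lt_of_lt_of_le (by positivity) hR
  have hρpos : ∀ i, 0 < ρ i := by
    intro i; obtain ⟨k, hk⟩ := hyp.1 i; rw [hk]; exact zpow_pos hδ0 k
  have key : ∀ N : ℕ, ∀ t : Fin n, t.1 = N → k₀ < t → ρ t = ρ k₀ → False := by
    intro N
    induction N using Nat.strong_induction_on with
    | _ N ihN =>
      intro t htN hlt heq
      by_cases hex : ∃ s : Fin n, k₀ < s ∧ s < t ∧ ρ s = ρ k₀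
      · obtain ⟨s, h1, h2, h3⟩ := hex
        exact ihN s.1 (by have := Fin.lt_def.mp h2; omega) s rfl h1 h3
      · push_neg at hex
        have hρ0 := hρpos k₀
        have hltv : k₀.1 < t.1 := hlt
        have htn : t.1 < n := t.2
        by_cases hc1 : t.1 = k₀.1 + 1
        · obtain ⟨p, hp1, hp2⟩ := hyp.2.1 k₀.1 (by omega)
          have e1 : (⟨k₀.1, by omega⟩ : Fin n) = k₀ := Fin.eta _ _
          have e2 : (⟨k₀.1 + 1, by omega⟩ : Fin n) = t := Fin.ext (by simp [hc1])
          rw [e1] at hp1; rw [e2] at hp2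
          have := hyp.2.2 k₀ t (ne_of_lt hlt) heq.symm p hp1 p hp2
          rw [dist_self] at this
          nlinarith
        · -- t ≥ k₀ + 2 : use the subchain strictly between
          set a := k₀.1 + 1 with ha
          set m := t.1 - k₀.1 - 1 with hm
          have hm1 : 1 ≤ m := by omega
          have ham : a + m ≤ n := by omega
          have hyp' := chainHyp_sub hyp a m ham
          set c' : Fin m → M := fun j => c ⟨a + j.1, by omega⟩ with hc'
          set ρ' : Fin m → ℝ := fun j => ρ ⟨a + j.1, by omega⟩ with hρ'
          haveI : Nonempty (Fin m) := ⟨⟨0, by omega⟩⟩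
          obtain ⟨m', hm'⟩ := Finite.exists_max ρ'
          have key2 := IH m (by omega) M R hR c' ρ' hyp' m' hm'
          have hρ'le : ρ' m' ≤ δ * ρ k₀ := by
            refine pow_step hδ0 hδ1 (hyp.1 _) (hyp.1 _) (hmax _) ?_
            exact hex ⟨a + m'.1, by omega⟩ (by simp [Fin.lt_def]; omega)
              (by simp [Fin.lt_def]; omega)
          obtain ⟨p, hp1, hp2⟩ := hyp.2.1 k₀.1 (by omega)
          have e1 : (⟨k₀.1, by omega⟩ : Fin n) = k₀ := Fin.eta _ _
          rw [e1] at hp1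
          have hp2' : p ∈ closedBall (c' ⟨0, by omega⟩) (ρ' ⟨0, by omega⟩) := hp2
          obtain ⟨q, hq1, hq2⟩ := hyp.2.1 (t.1 - 1) (by omega)
          have e2 : (⟨t.1 - 1 + 1, by omega⟩ : Fin n) = t := Fin.ext (by simp; omega)
          rw [e2] at hq2
          have hq1' : q ∈ closedBall (c' ⟨m - 1, by omega⟩) (ρ' ⟨m - 1, by omega⟩) := by
            show q ∈ closedBall (c ⟨a + (m-1), by omega⟩) (ρ ⟨a + (m-1), by omega⟩)
            rw [show (⟨a + (m-1), by omega⟩ : Fin n) = ⟨t.1 - 1, by omega⟩ from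
              Fin.ext (by simp; omega)]
            exact hq1
          have d1 := key2 ⟨0, by omega⟩ p hp2'
          have d2 := key2 ⟨m - 1, by omega⟩ q hq1'
          have hd : dist p q ≤ 2 * (δ * ρ k₀) * (1 / (1 - 2 * δ)) := by
            calc dist p q ≤ dist p (c' m') + dist q (c' m') := dist_triangle_right _ _ _
              _ ≤ ρ' m' * (1 / (1 - 2*δ)) + ρ' m' * (1 / (1 - 2*δ)) := add_le_add d1 d2
              _ ≤ 2 * (δ * ρ k₀) * (1 / (1 - 2 * δ)) := by nlinarith
          have hsep := hyp.2.2 k₀ t (ne_of_lt hlt) heq.symm p hp1 q hq2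
          have hRρ : 2 / (1 - 2*δ) * ρ k₀ ≤ R * ρ k₀ :=
            mul_le_mul_of_nonneg_right hR (le_of_lt hρ0)
          have h1u : (1 - 2*δ) * (1 / (1 - 2*δ)) = 1 := mul_one_div_cancel (ne_of_gt h12)
          have h2u : 2 / (1 - 2*δ) = 2 * (1 / (1 - 2*δ)) := by ring
          rw [h2u] at hRρ
          nlinarith [mul_pos hρ0 hu]
  intro t hlt heq
  exact key t.1 t rfl hlt heq

/-- The inductive step, for `k₀ ≤ i`. -/
lemma chain_step {δ : ℝ} (hδ0 : 0 < δ) (hδ : δ < 1/3) {n : ℕ}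
    (IH : ∀ m < n, Concl δ m)
    {M : Type} [MetricSpace M] {R : ℝ} (hR : 2 / (1 - 2 * δ) ≤ R)
    {c : Fin n → M} {ρ : Fin n → ℝ} (hyp : ChainHyp δ R n c ρ)
    (k₀ : Fin n) (hmax : ∀ i, ρ i ≤ ρ k₀) (i : Fin n) (hki : k₀ ≤ i)
    (x : M) (hx : x ∈ closedBall (c i) (ρ i)) :
    dist x (c k₀) ≤ ρ k₀ * (1 / (1 - 2 * δ)) := by
  have h12 : 0 < 1 - 2 * δ := by linarith
  have hδ1 : δ < 1 := by linarith
  have hu : (0:ℝ) < 1 / (1 - 2 * δ) := by positivity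
  have h1u : (1 - 2*δ) * (1 / (1 - 2*δ)) = 1 := mul_one_div_cancel (ne_of_gt h12)
  have hρpos : ∀ j, 0 < ρ j := by
    intro j; obtain ⟨k, hk⟩ := hyp.1 j; rw [hk]; exact zpow_pos hδ0 k
  have hρ0 := hρpos k₀
  rcases eq_or_lt_of_le hki with heq | hlt
  · subst heq
    have : dist x (c k₀) ≤ ρ k₀ := hx
    nlinarith
  · have hltv : k₀.1 < i.1 := hlt
    have hin : i.1 < n := i.2
    set a := k₀.1 + 1 with ha
    set m := i.1 - k₀.1 with hm
    have hm1 : 1 ≤ m := by omega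
    have ham : a + m ≤ n := by omega
    have hyp' := chainHyp_sub hyp a m ham
    set c' : Fin m → M := fun j => c ⟨a + j.1, by omega⟩ with hc'
    set ρ' : Fin m → ℝ := fun j => ρ ⟨a + j.1, by omega⟩ with hρ'
    haveI : Nonempty (Fin m) := ⟨⟨0, by omega⟩⟩
    obtain ⟨m', hm'⟩ := Finite.exists_max ρ'
    have key2 := IH m (by omega) M R hR c' ρ' hyp' m' hm'
    have hρ'le : ρ' m' ≤ δ * ρ k₀ := by
      refine pow_step hδ0 hδ1 (hyp.1 _) (hyp.1 _) (hmax _) ?_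
      exact no_twin hδ0 hδ IH hR hyp k₀ hmax ⟨a + m'.1, by omega⟩
        (by simp [Fin.lt_def]; omega)
    obtain ⟨p, hp1, hp2⟩ := hyp.2.1 k₀.1 (by omega)
    have e1 : (⟨k₀.1, by omega⟩ : Fin n) = k₀ := Fin.eta _ _
    rw [e1] at hp1
    have hp2' : p ∈ closedBall (c' ⟨0, by omega⟩) (ρ' ⟨0, by omega⟩) := hp2
    have hxs : x ∈ closedBall (c' ⟨m - 1, by omega⟩) (ρ' ⟨m - 1, by omega⟩) := by
      show x ∈ closedBall (c ⟨a + (m-1), by omega⟩) (ρ ⟨a + (m-1), by omega⟩)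
      rw [show (⟨a + (m-1), by omega⟩ : Fin n) = i from Fin.ext (by simp; omega)]
      exact hx
    have d1 := key2 ⟨m - 1, by omega⟩ x hxs
    have d2 := key2 ⟨0, by omega⟩ p hp2'
    have hpk : dist p (c k₀) ≤ ρ k₀ := hp1
    calc dist x (c k₀) ≤ dist x p + dist p (c k₀) := dist_triangle _ _ _
      _ ≤ (dist x (c' m') + dist p (c' m')) + dist p (c k₀) :=
          add_le_add_left (dist_triangle_right _ _ _) _
      _ ≤ (ρ' m' * (1/(1-2*δ)) + ρ' m' * (1/(1-2*δ))) + ρ k₀ :=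
          add_le_add (add_le_add d1 d2) hpk
      _ ≤ ρ k₀ * (1 / (1 - 2 * δ)) := by nlinarith

lemma chain_main {δ : ℝ} (hδ0 : 0 < δ) (hδ : δ < 1/3) : ∀ n, Concl δ n := by
  intro n
  induction n using Nat.strong_induction_on with
  | _ n IH =>
    intro M _ R hR c ρ hyp k₀ hmax i x hx
    rcases le_or_gt k₀ i with h | h
    · exact chain_step hδ0 hδ IH hR hyp k₀ hmax i h x hx
    · have hyp' := chainHyp_rev hyp
      have hmax' : ∀ j, (ρ ∘ Fin.rev) j ≤ (ρ ∘ Fin.rev) (Fin.rev k₀) := by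
        intro j
        simpa [Function.comp, Fin.rev_rev] using hmax (Fin.rev j)
      have hki : Fin.rev k₀ ≤ Fin.rev i := Fin.rev_le_rev.mpr h.le
      have hx' : x ∈ closedBall ((c ∘ Fin.rev) (Fin.rev i)) ((ρ ∘ Fin.rev) (Fin.rev i)) := by
        simpa [Function.comp, Fin.rev_rev] using hx
      have := chain_step hδ0 hδ IH hR hyp' (Fin.rev k₀) hmax' (Fin.rev i) hki x hx'
      simpa [Function.comp, Fin.rev_rev] using this

/-- Chain-of-balls lemma: given `0 < δ < 1/3` there is `R₀` such that for any separation
constant `R ≥ R₀`, any chain of balls with radii integer powers of `δ`, consecutive balls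
intersecting, and equal-radius balls `R·d`-separated, lies within distance
`radius(B_{k₀})·(1 + 2δ + 4δ² + ⋯) = radius(B_{k₀})/(1-2δ)` of the center of a
maximal-radius ball `B_{k₀}`. -/
theorem chain_of_balls (δ : ℝ) (hδ0 : 0 < δ) (hδ : δ < 1 / 3) :
    ∃ R₀ : ℝ, ∀ (M : Type) [MetricSpace M], ∀ R : ℝ, R₀ ≤ R →
      ∀ (n : ℕ) (c : Fin n → M) (ρ : Fin n → ℝ),
        (∀ i, ∃ k : ℤ, ρ i = δ ^ k) →
        (∀ (i : ℕ) (h : i + 1 < n),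
          (closedBall (c ⟨i, Nat.lt_of_succ_lt h⟩) (ρ ⟨i, Nat.lt_of_succ_lt h⟩) ∩
            closedBall (c ⟨i + 1, h⟩) (ρ ⟨i + 1, h⟩)).Nonempty) →
        (∀ i j, i ≠ j → ρ i = ρ j →
          ∀ p ∈ closedBall (c i) (ρ i), ∀ q ∈ closedBall (c j) (ρ j),
            R * ρ i ≤ dist p q) →
        ∀ k₀ : Fin n, (∀ i, ρ i ≤ ρ k₀) →
          ∀ i, ∀ x ∈ closedBall (c i) (ρ i),
            dist x (c k₀) ≤ ρ k₀ * (1 / (1 - 2 * δ)) := by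
  refine ⟨2 / (1 - 2 * δ), ?_⟩
  intro M _ R hR n c ρ h1 h2 h3 k₀ hmax i x hx
  exact chain_main hδ0 hδ n M R hR c ρ ⟨h1, h2, h3⟩ k₀ hmax i x hx
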